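/- With Leontief utilities, weak core fair share and core fair share are equivalent: a distribution q satisfies core fair share at a profile P if and only if q satisfies weak core fair share at P. -/

import Mathlib

/-- Leontief utility of an agent with peak `p` at distribution `q`:
the minimum of `q j / p j` over alternatives `j` with `p j > 0`. -/
noncomputable def leontief {m : ℕ} (p q : Fin m → ℝ) : ℝ :=
  sInf {x : ℝ | ∃ j, 0 < p j ∧ x = q j / p j}

section aux
variable {m : ℕ}

lemma leontief_set_finite (p q : Fin m → ℝ) :
    {x : ℝ | ∃ j, 0 < p j ∧ x = q j / p j}.Finite := by
  apply (Set.finite_range (fun j => q j / p j)).subset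
  rintro x ⟨j, _, rfl⟩; exact ⟨j, rfl⟩

lemma le_leontief {p q : Fin m → ℝ} {t : ℝ} (hp : ∃ j, 0 < p j)
    (h : ∀ j, 0 < p j → t ≤ q j / p j) : t ≤ leontief p q := by
  apply le_csInf
  · obtain ⟨j, hj⟩ := hp; exact ⟨q j / p j, j, hj, rfl⟩
  · rintro b ⟨j, hj, rfl⟩; exact h j hj

lemma leontief_le {p q : Fin m → ℝ} {j : Fin m} (hj : 0 < p j) :
    leontief p q ≤ q j / p j :=
  csInf_le (leontief_set_finite p q).bddBelow ⟨j, hj, rfl⟩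

lemma leontief_attained {p : Fin m → ℝ} (q : Fin m → ℝ) (hp : ∃ j, 0 < p j) :
    ∃ j, 0 < p j ∧ leontief p q = q j / p j := by
  have hne : {x : ℝ | ∃ j, 0 < p j ∧ x = q j / p j}.Nonempty := by
    obtain ⟨j, hj⟩ := hp; exact ⟨q j / p j, j, hj, rfl⟩
  exact hne.csInf_mem (leontief_set_finite p q)

lemma supp_nonempty {p : Fin m → ℝ} (hp : p ∈ stdSimplex ℝ (Fin m)) :
    ∃ j, 0 < p j := by
  by_contra h
  push_neg at h
  have h0 : ∀ j, p j = 0 := fun j => le_antisymm (h j) (hp.1 j)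
  have h2 := hp.2
  rw [Finset.sum_congr rfl (fun j _ => h0 j)] at h2
  simp at h2

lemma leontief_nonneg {p q : Fin m → ℝ} (hp : ∃ j, 0 < p j)
    (hq : ∀ j, 0 ≤ q j) : 0 ≤ leontief p q :=
  le_leontief hp fun j hj => div_nonneg (hq j) hj.le

lemma leontief_mul_le {p q : Fin m → ℝ} (hq : ∀ j, 0 ≤ q j) (j : Fin m)
    (hpj : 0 ≤ p j) : leontief p q * p j ≤ q j := by
  rcases eq_or_lt_of_le hpj with h | h
  · rw [← h, mul_zero]; exact hq j
  · exact (le_div_iff₀ h).1 (leontief_le h)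

lemma leontief_mix_ge {p x y : Fin m → ℝ} (hp : ∃ j, 0 < p j) {a b : ℝ}
    (ha : 0 ≤ a) (hb : 0 ≤ b) (hy : ∀ j, 0 ≤ y j) :
    a * leontief p x ≤ leontief p (a • x + b • y) := by
  apply le_leontief hp
  intro j hj
  have h1 : a * leontief p x ≤ a * (x j / p j) :=
    mul_le_mul_of_nonneg_left (leontief_le hj) ha
  have h3 : (a * x j) / p j ≤ (a * x j + b * y j) / p j :=
    (div_le_div_iff_of_pos_right hj).2 (le_add_of_nonneg_right (mul_nonneg hb (hy j)))
  have h4 : (a • x + b • y) j = a * x j + b * y j := by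
    simp [smul_eq_mul]
  rw [h4]
  calc a * leontief p x ≤ a * (x j / p j) := h1
    _ = a * x j / p j := by ring
    _ ≤ _ := h3

end aux

/-- `q` satisfies core fair share at profile `P` (with Leontief utilities). -/
def CoreFairShare {m n : ℕ} (P : Fin n → Fin m → ℝ) (q : Fin m → ℝ) : Prop :=
  ¬ ∃ (N' : Finset (Fin n)) (q' : Fin m → ℝ), N'.Nonempty ∧
      q' ∈ stdSimplex ℝ (Fin m) ∧
      ∀ q'' ∈ stdSimplex ℝ (Fin m),
        (∀ i ∈ N', leontief (P i) q ≤
          leontief (P i) (((N'.card : ℝ) / (n : ℝ)) • q' +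
            (1 - (N'.card : ℝ) / (n : ℝ)) • q'')) ∧
        (∃ i ∈ N', leontief (P i) q <
          leontief (P i) (((N'.card : ℝ) / (n : ℝ)) • q' +
            (1 - (N'.card : ℝ) / (n : ℝ)) • q''))

/-- `q` satisfies weak core fair share at profile `P` (with Leontief utilities). -/
def WeakCoreFairShare {m n : ℕ} (P : Fin n → Fin m → ℝ) (q : Fin m → ℝ) : Prop :=
  ¬ ∃ (N' : Finset (Fin n)) (q' : Fin m → ℝ), N'.Nonempty ∧
      q' ∈ stdSimplex ℝ (Fin m) ∧
      ∀ q'' ∈ stdSimplex ℝ (Fin m), ∀ i ∈ N',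
        leontief (P i) q <
          leontief (P i) (((N'.card : ℝ) / (n : ℝ)) • q' +
            (1 - (N'.card : ℝ) / (n : ℝ)) • q'')

/-- with Leontief utilities, core fair share and weak core fair share
are equivalent. -/
theorem cfs_iff_weak_cfs {m n : ℕ}
    (P : Fin n → Fin m → ℝ) (hP : ∀ i, P i ∈ stdSimplex ℝ (Fin m))
    (q : Fin m → ℝ) (hq : q ∈ stdSimplex ℝ (Fin m)) :
    CoreFairShare P q ↔ WeakCoreFairShare P q := by
  constructor
  · -- easy direction: CFS → WCFS
    intro h hcon
    apply h
    obtain ⟨N', q', hN', hq', hw⟩ := hcon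
    refine ⟨N', q', hN', hq', fun q'' hq'' => ⟨fun i hi => (hw q'' hq'' i hi).le, ?_⟩⟩
    obtain ⟨i, hi⟩ := hN'
    exact ⟨i, hi, hw q'' hq'' i hi⟩
  · -- hard direction: WCFS → CFS
    intro hw hcon
    obtain ⟨N', q', hN', hq', hb⟩ := hcon
    set r : ℝ := (N'.card : ℝ) / (n : ℝ) with hrdef
    have hn : 0 < n := hN'.choose.pos
    have hr0 : 0 < r := div_pos (Nat.cast_pos.2 (Finset.card_pos.2 hN'))
      (Nat.cast_pos.2 hn)
    have hr1 : r ≤ 1 := by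
      rw [hrdef, div_le_one (Nat.cast_pos.2 hn : (0:ℝ) < n)]
      exact_mod_cast N'.card_le_univ.trans_eq (by simp)
    -- dispatch tiny m
    rcases Nat.lt_or_ge m 2 with hm | hm
    · interval_cases m
      · exact absurd hq.2 (by simp)
      · -- m = 1 : every distribution equals q, no strict improvement possible
        have hone : ∀ f : Fin 1 → ℝ, f ∈ stdSimplex ℝ (Fin 1) → ∀ j, f j = 1 := by
          intro f hf j
          have := hf.2
          rw [Fin.sum_univ_one] at this
          rw [Subsingleton.elim j 0, this]
        obtain ⟨_, i, hi, hlt⟩ := hb q hq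
        have hmix : (r • q' + (1 - r) • q) = q := by
          funext j
          have h1 := hone q' hq' j
          have h2 := hone q hq j
          simp [smul_eq_mul, h1, h2]
        rw [hmix] at hlt
        exact lt_irrefl _ hlt
    -- main case : m ≥ 2
    have hsupp : ∀ i : Fin n, ∃ j, 0 < P i j := fun i => supp_nonempty (hP i)
    -- Step 1 : leontief (P i) q ≤ r * leontief (P i) q'
    have key : ∀ i ∈ N', leontief (P i) q ≤ r * leontief (P i) q' := by
      intro i hi
      obtain ⟨js, hjs, hL⟩ := leontief_attained q' (hsupp i)
      haveI : Nontrivial (Fin m) := Fin.nontrivial_iff_two_le.mpr hm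
      obtain ⟨k, hk⟩ := exists_ne js
      set ek : Fin m → ℝ := fun j => if j = k then 1 else 0 with hek
      have hekS : ek ∈ stdSimplex ℝ (Fin m) := by
        constructor
        · intro j; simp only [hek]; split <;> norm_num
        · simp [hek]
      have h1 := (hb ek hekS).1 i hi
      have h2 : leontief (P i) (r • q' + (1 - r) • ek) ≤
          (r • q' + (1 - r) • ek) js / P i js := leontief_le hjs
      have h3 : (r • q' + (1 - r) • ek) js = r * q' js := by
        simp [hek, smul_eq_mul, if_neg hk.symm]
      rw [h3] at h2
      rw [hL, ← mul_div_assoc]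
      exact h1.trans h2
    -- Step 2 : case split
    by_cases hcase : ∀ j, r * q' j ≤ q j
    · -- build q''₀ with mix = q, contradicting strictness
      rcases eq_or_lt_of_le hr1 with hr | hr
      · -- r = 1 : q' = q
        have hle : ∀ j ∈ Finset.univ, q' j ≤ q j := by
          intro j _
          have := hcase j
          rw [hr, one_mul] at this
          exact this
        have heq : ∀ j ∈ Finset.univ, q' j = q j :=
          (Finset.sum_eq_sum_iff_of_le hle).1 (hq'.2.trans hq.2.symm)
        obtain ⟨_, i, hi, hlt⟩ := hb q hq
        have hmix : (r • q' + (1 - r) • q) = q := by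
          funext j
          have := heq j (Finset.mem_univ j)
          simp [smul_eq_mul, hr, this]
        rw [hmix] at hlt
        exact lt_irrefl _ hlt
      · -- r < 1
        set q0 : Fin m → ℝ := fun j => (q j - r * q' j) / (1 - r) with hq0def
        have h1r : (0:ℝ) < 1 - r := by linarith
        have hq0S : q0 ∈ stdSimplex ℝ (Fin m) := by
          constructor
          · intro j
            exact div_nonneg (sub_nonneg.2 (hcase j)) h1r.le
          · rw [hq0def]
            simp only
            rw [← Finset.sum_div, Finset.sum_sub_distrib, ← Finset.mul_sum,
              hq.2, hq'.2, mul_one]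
            exact div_self h1r.ne'
        have hmix : (r • q' + (1 - r) • q0) = q := by
          funext j
          simp only [Pi.add_apply, Pi.smul_apply, smul_eq_mul, hq0def]
          field_simp
          ring
        obtain ⟨_, i, hi, hlt⟩ := hb q0 hq0S
        rw [hmix] at hlt
        exact lt_irrefl _ hlt
    · -- ∃ j₀ with q j₀ < r * q' j₀ : strict room, build strictly better x
      push_neg at hcase
      obtain ⟨j0, hj0⟩ := hcase
      set β : Fin n → ℝ := fun i => leontief (P i) q / r with hβdef
      have hβnn : ∀ i, 0 ≤ β i := fun i =>
        div_nonneg (leontief_nonneg (hsupp i) hq.1) hr0.le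
      have hβr : ∀ i, r * β i = leontief (P i) q := by
        intro i
        rw [hβdef]
        field_simp
      set c : Fin m → ℝ := fun j => N'.sup' hN' (fun i => β i * P i j) with hcdef
      have hβq' : ∀ i ∈ N', β i ≤ leontief (P i) q' := by
        intro i hi
        rw [hβdef]
        exact (div_le_iff₀ hr0).2 (by rw [mul_comm]; exact key i hi)
      have hcq' : ∀ j, c j ≤ q' j := by
        intro j
        apply Finset.sup'_le
        intro i hi
        calc β i * P i j ≤ leontief (P i) q' * P i j :=
              mul_le_mul_of_nonneg_right (hβq' i hi) ((hP i).1 j)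
          _ ≤ q' j := leontief_mul_le hq'.1 j ((hP i).1 j)
      have hclt : c j0 < q' j0 := by
        rw [hcdef]
        apply (Finset.sup'_lt_iff hN').2
        intro i hi
        calc β i * P i j0 = leontief (P i) q * P i j0 / r := by
              rw [hβdef]; ring
          _ ≤ q j0 / r :=
              (div_le_div_iff_of_pos_right hr0).2
                (leontief_mul_le hq.1 j0 ((hP i).1 j0))
          _ < q' j0 := (div_lt_iff₀ hr0).2 (by rw [mul_comm]; exact hj0)
      have hcnn : ∀ j, 0 ≤ c j := by
        intro j
        obtain ⟨i0, hi0⟩ := hN'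
        refine le_trans (mul_nonneg (hβnn i0) ((hP i0).1 j)) ?_
        exact Finset.le_sup' (fun i => β i * P i j) hi0
      set C : ℝ := ∑ j, c j with hCdef
      have hC : C < 1 := by
        calc C < ∑ j, q' j :=
            Finset.sum_lt_sum (fun j _ => hcq' j) ⟨j0, Finset.mem_univ j0, hclt⟩
          _ = 1 := hq'.2
      have hm0 : (0:ℝ) < m := by positivity
      set x : Fin m → ℝ := fun j => c j + (1 - C) / m with hxdef
      have hxS : x ∈ stdSimplex ℝ (Fin m) := by
        constructor
        · intro j
          exact add_nonneg (hcnn j) (div_nonneg (by linarith) hm0.le)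
        · rw [hxdef]
          simp only
          rw [Finset.sum_add_distrib, Finset.sum_const, Finset.card_univ,
            Fintype.card_fin, nsmul_eq_mul]
          rw [mul_div_cancel₀ _ hm0.ne', ← hCdef]
          ring
      have hux : ∀ i ∈ N', β i < leontief (P i) x := by
        intro i hi
        obtain ⟨j, hj, hLx⟩ := leontief_attained x (hsupp i)
        rw [hLx, lt_div_iff₀ hj]
        have h1 : β i * P i j ≤ c j := Finset.le_sup' (fun i => β i * P i j) hi
        have h2 : (0:ℝ) < (1 - C) / m := div_pos (by linarith) hm0
        calc β i * P i j ≤ c j := h1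
          _ < c j + (1 - C) / m := by linarith
          _ = x j := rfl
      apply hw
      refine ⟨N', x, hN', hxS, fun q'' hq'' i hi => ?_⟩
      calc leontief (P i) q = r * β i := (hβr i).symm
        _ < r * leontief (P i) x := by
            exact mul_lt_mul_of_pos_left (hux i hi) hr0
        _ ≤ leontief (P i) (r • x + (1 - r) • q'') :=
            leontief_mix_ge (hsupp i) hr0.le (by linarith) hq''.1
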